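/- Let a be an integer and let M be the 5×5 integer matrix with rows v1 = (3a+1,−3a−1,−3a−1,−3a,−3a−2), v2 = (3a+1,3a+1,−3a−1,−3a−1,−3a−1), v3 = (3a,3a,3a+1,−3a−3,3a+1), v4 = (3a+2,−3a,−3a,3a+2,−3a−1), v5 = (3a+1,3a,−3a−1,−3a−2,3a+1). Then det(M) = ±(3888a^5 + 6480a^4 + 4968a^3 + 2088a^2 + 471a + 45). -/

import Mathlib

set_option maxHeartbeats 2000000


theorem lattice_det_class2 (a : ℤ) :
    let M : Matrix (Fin 5) (Fin 5) ℤ := Matrix.of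
      ![![3 * a + 1, -3 * a - 1, -3 * a - 1, -3 * a, -3 * a - 2],
        ![3 * a + 1, 3 * a + 1, -3 * a - 1, -3 * a - 1, -3 * a - 1],
        ![3 * a, 3 * a, 3 * a + 1, -3 * a - 3, 3 * a + 1],
        ![3 * a + 2, -3 * a, -3 * a, 3 * a + 2, -3 * a - 1],
        ![3 * a + 1, 3 * a, -3 * a - 1, -3 * a - 2, 3 * a + 1]]
    M.det = 3888 * a ^ 5 + 6480 * a ^ 4 + 4968 * a ^ 3 + 2088 * a ^ 2 + 471 * a + 45 ∨
    M.det = -(3888 * a ^ 5 + 6480 * a ^ 4 + 4968 * a ^ 3 + 2088 * a ^ 2 + 471 * a + 45) := by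
  left
  simp [Matrix.det_succ_row_zero, Fin.sum_univ_succ, Fin.succAbove]
  ring
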